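/- arXiv:1303.1701 — 4 statements merged into one kernel-verified Lean document; each statement's English description precedes it below -/
import Mathlib

section
/- Let λ > 0 with λ ≠ 1 and φ ∈ (-π, π]. Let t = λ + λ⁻¹. Then cosφ = (cos(3φ) + (Re(tr) + 1)·t) / (2·Re(tr) + t² - 1), where tr = λe^{iφ} + λ⁻¹e^{iφ} + e^{-2iφ} and Re(tr) denotes its real part. In particular the denominator 2·Re(tr) + t² - 1 is nonzero. -/
open Real Complex

theorem stmt_2 (lam φ : ℝ) (hlam : 0 < lam) (hlam1 : lam ≠ 1)
    (hφ : φ ∈ Set.Ioc (-π) π)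
    (t : ℝ) (ht : t = lam + lam⁻¹)
    (tr : ℂ)
    (htr : tr = (lam : ℂ) * Complex.exp (Complex.I * φ) +
      (lam : ℂ)⁻¹ * Complex.exp (Complex.I * φ) + Complex.exp (-2 * Complex.I * φ)) :
    2 * tr.re + t ^ 2 - 1 ≠ 0 ∧
      Real.cos φ = (Real.cos (3 * φ) + (tr.re + 1) * t) / (2 * tr.re + t ^ 2 - 1) := by
  have hre : tr.re = t * Real.cos φ + Real.cos (2 * φ) := by
    subst htr ht
    simp [Complex.exp_re, Complex.add_re, Complex.mul_re, Complex.mul_im,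
      Real.cos_neg]
    ring_nf
  have hc2 : Real.cos (2 * φ) = 2 * Real.cos φ ^ 2 - 1 := Real.cos_two_mul φ
  have hc3 : Real.cos (3 * φ) = 4 * Real.cos φ ^ 3 - 3 * Real.cos φ :=
    Real.cos_three_mul φ
  have ht2 : 2 < t := by
    have h1 : lam * lam⁻¹ = 1 := mul_inv_cancel₀ (ne_of_gt hlam)
    have h2 : (lam - 1) ^ 2 > 0 := by
      have := sub_ne_zero.mpr hlam1
      positivity
    rw [ht]
    nlinarith [mul_pos hlam (inv_pos.mpr hlam)]
  have hD : 2 * tr.re + t ^ 2 - 1 ≠ 0 := by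
    have hkey : 2 * tr.re + t ^ 2 - 1
        = (2 * Real.cos φ + t / 2) ^ 2 + 3 * t ^ 2 / 4 - 3 := by
      rw [hre, hc2]; ring
    nlinarith [sq_nonneg (2 * Real.cos φ + t / 2), ht2]
  refine ⟨hD, ?_⟩
  rw [eq_div_iff hD, hre, hc2, hc3]
  ring
end

section
/- Let K ⊆ ℂ be a subfield closed under complex conjugation, λ > 0 real with λ ≠ 1, φ ∈ (-π, π]. If λ ∈ K and λe^{iφ} + λ⁻¹e^{iφ} + e^{-2iφ} ∈ K, then e^{iφ} ∈ K. -/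
open Real Complex

theorem stmt_5 (K : Subfield ℂ) (hK : ∀ z ∈ K, (starRingEnd ℂ) z ∈ K)
    (lam φ : ℝ) (hlam : 0 < lam) (hlam1 : lam ≠ 1)
    (hφ : φ ∈ Set.Ioc (-π) π)
    (hlamK : (lam : ℂ) ∈ K)
    (htrK : (lam : ℂ) * Complex.exp (Complex.I * φ) +
      (lam : ℂ)⁻¹ * Complex.exp (Complex.I * φ) + Complex.exp (-2 * Complex.I * φ) ∈ K) :
    Complex.exp (Complex.I * φ) ∈ K := by
  set z : ℂ := Complex.exp (Complex.I * φ) with hz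
  have hz0 : z ≠ 0 := Complex.exp_ne_zero _
  have hzinv : z⁻¹ = Complex.exp (-(Complex.I * φ)) := by
    rw [hz, ← Complex.exp_neg]
  have hconjz : (starRingEnd ℂ) z = z⁻¹ := by
    rw [hz, ← Complex.exp_conj, hzinv]
    congr 1
    simp [Complex.conj_I]
  have hexp2 : Complex.exp (-2 * Complex.I * φ) = (z ^ 2)⁻¹ := by
    rw [hz, ← Complex.exp_nat_mul, ← Complex.exp_neg]
    ring_nf
  set mr : ℝ := lam + lam⁻¹ with hmr
  set cr : ℝ := 2 * Real.cos φ with hcr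
  have hmr2 : 2 < mr := by
    rw [hmr, ← sub_pos]
    have h1 : lam + lam⁻¹ - 2 = (lam - 1) ^ 2 / lam := by
      field_simp; ring
    rw [h1]
    apply div_pos _ hlam
    have h2 : lam - 1 ≠ 0 := sub_ne_zero.mpr hlam1
    positivity
  have hcr2 : cr ≤ 2 := by
    rw [hcr]; nlinarith [Real.cos_le_one φ]
  have hcrge : -2 ≤ cr := by
    rw [hcr]; nlinarith [Real.neg_one_le_cos φ]
  have hc : z + z⁻¹ = (cr : ℂ) := by
    rw [hz, hzinv, mul_comm Complex.I (φ : ℂ), ← neg_mul,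
      Complex.exp_mul_I, Complex.exp_mul_I, Complex.cos_neg, Complex.sin_neg, hcr]
    push_cast
    ring
  set s : ℂ := z - z⁻¹ with hs
  have hmrK : (mr : ℂ) ∈ K := by
    rw [hmr]; push_cast
    exact K.add_mem hlamK (K.inv_mem hlamK)
  have h2K : (2 : ℂ) ∈ K := by
    rw [show (2 : ℂ) = 1 + 1 by norm_num]
    exact K.add_mem K.one_mem K.one_mem
  have h3K : (3 : ℂ) ∈ K := by
    rw [show (3 : ℂ) = 2 + 1 by norm_num]
    exact K.add_mem h2K K.one_mem
  have h4K : (4 : ℂ) ∈ K := by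
    rw [show (4 : ℂ) = 2 + 2 by norm_num]
    exact K.add_mem h2K h2K
  have ht : (mr : ℂ) * z + (z ^ 2)⁻¹ ∈ K := by
    have h := htrK
    rw [hexp2] at h
    convert h using 1
    simp only [hmr]
    push_cast
    ring
  have ht' : (mr : ℂ) * z⁻¹ + z ^ 2 ∈ K := by
    have h2 := hK _ ht
    rw [map_add, map_mul, map_inv₀, map_pow, hconjz] at h2
    have h3 : (starRingEnd ℂ) (mr : ℂ) = (mr : ℂ) := Complex.conj_ofReal _
    rw [h3, inv_pow, inv_inv] at h2
    exact h2
  -- A = s * (mr - cr) ∈ K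
  have hAeq : s * ((mr : ℂ) - cr) = ((mr : ℂ) * z + (z ^ 2)⁻¹) - ((mr : ℂ) * z⁻¹ + z ^ 2) := by
    rw [hs, ← hc]
    field_simp
    ring
  have hAmem : s * ((mr : ℂ) - cr) ∈ K := by
    rw [hAeq]; exact K.sub_mem ht ht'
  -- q = mr*cr + cr² ∈ K
  set qr : ℝ := mr * cr + cr ^ 2 with hqr
  have hqeq : ((qr : ℝ) : ℂ) = ((mr : ℂ) * z + (z ^ 2)⁻¹) + ((mr : ℂ) * z⁻¹ + z ^ 2) + 2 := by
    rw [hqr]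
    push_cast
    rw [← hc]
    field_simp
    ring
  have hqK : ((qr : ℝ) : ℂ) ∈ K := by
    rw [hqeq]
    exact K.add_mem (K.add_mem ht ht') h2K
  -- s² = cr² - 4
  have hs2 : s ^ 2 = (cr : ℂ) ^ 2 - 4 := by
    have hzz : z * z⁻¹ = 1 := mul_inv_cancel₀ hz0
    have h1 : s ^ 2 = (z + z⁻¹) ^ 2 - 4 * (z * z⁻¹) := by rw [hs]; ring
    rw [h1, hzz, hc]
    ring
  -- A² ∈ K and A² = P - Q * cr
  have hA2mem : ((cr : ℂ) ^ 2 - 4) * ((mr : ℂ) - cr) ^ 2 ∈ K := by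
    have h := K.mul_mem hAmem hAmem
    have heq : s * ((mr : ℂ) - cr) * (s * ((mr : ℂ) - cr))
        = ((cr : ℂ) ^ 2 - 4) * ((mr : ℂ) - cr) ^ 2 := by
      rw [show s * ((mr : ℂ) - cr) * (s * ((mr : ℂ) - cr))
        = s ^ 2 * ((mr : ℂ) - cr) ^ 2 by ring, hs2]
    rwa [heq] at h
  set Pr : ℝ := qr ^ 2 + 4 * mr ^ 2 * qr - 4 * mr ^ 2 - 4 * qr with hPr
  set Qr : ℝ := 4 * mr * (mr ^ 2 + qr - 3) with hQr
  have hident : (cr ^ 2 - 4) * (mr - cr) ^ 2 = Pr - Qr * cr := by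
    rw [hPr, hQr, hqr]; ring
  have hQpos : 0 < Qr := by
    have hmrsq : 4 < mr ^ 2 := by nlinarith
    have hX : 0 < mr ^ 2 + qr - 3 := by
      rw [hqr]
      nlinarith [sq_nonneg (2 * cr + mr)]
    have h4m : (0 : ℝ) < 4 * mr := by linarith
    rw [hQr]
    exact mul_pos h4m hX
  have hPK : ((Pr : ℝ) : ℂ) ∈ K := by
    rw [hPr]
    push_cast
    refine K.sub_mem (K.sub_mem (K.add_mem (K.pow_mem hqK 2) ?_) ?_) ?_
    · exact K.mul_mem (K.mul_mem h4K (K.pow_mem hmrK 2)) hqK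
    · exact K.mul_mem h4K (K.pow_mem hmrK 2)
    · exact K.mul_mem h4K hqK
  have hQK : ((Qr : ℝ) : ℂ) ∈ K := by
    rw [hQr]
    push_cast
    exact K.mul_mem (K.mul_mem h4K hmrK)
      (K.sub_mem (K.add_mem (K.pow_mem hmrK 2) hqK) h3K)
  -- cr ∈ K
  have hcrK : ((cr : ℝ) : ℂ) ∈ K := by
    have hcval : ((cr : ℝ) : ℂ) = (((Pr : ℝ) : ℂ) - ((cr : ℂ) ^ 2 - 4) * ((mr : ℂ) - cr) ^ 2)
        / ((Qr : ℝ) : ℂ) := by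
      have hC : ((cr : ℂ) ^ 2 - 4) * ((mr : ℂ) - cr) ^ 2 = ((Pr : ℝ) : ℂ) - ((Qr : ℝ) : ℂ) * cr := by
        exact_mod_cast congrArg (Complex.ofReal) hident
      rw [hC]
      have hQ0 : ((Qr : ℝ) : ℂ) ≠ 0 := by
        exact_mod_cast Complex.ofReal_ne_zero.mpr (ne_of_gt hQpos)
      field_simp
      ring
    rw [hcval]
    exact K.div_mem (K.sub_mem hPK hA2mem) hQK
  -- s ∈ K
  have hmc0 : (mr : ℂ) - cr ≠ 0 := by
    have : (0 : ℝ) < mr - cr := by linarith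
    rw [show (mr : ℂ) - cr = ((mr - cr : ℝ) : ℂ) by push_cast; ring]
    exact_mod_cast Complex.ofReal_ne_zero.mpr (ne_of_gt this)
  have hsK : s ∈ K := by
    have : s = s * ((mr : ℂ) - cr) / ((mr : ℂ) - cr) := by
      field_simp
    rw [this]
    exact K.div_mem hAmem (K.sub_mem hmrK hcrK)
  -- conclude
  have hzval : z = ((cr : ℂ) + s) / 2 := by
    rw [hs, ← hc]; ring
  rw [hzval]
  exact K.div_mem (K.add_mem hcrK hsK) h2K
end

section
/- Let K ⊆ ℂ be a subfield closed under complex conjugation, λ > 0 real with λ ≠ 1, φ ∈ (-π, π]. If λ ∈ K and λe^{iφ} + λ⁻¹e^{iφ} + e^{-2iφ} ∈ K, then all three eigenvalues λe^{iφ}, e^{-2iφ}, λ⁻¹e^{iφ} belong to K. -/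
open Real Complex

theorem stmt_6 (K : Subfield ℂ) (hK : ∀ z ∈ K, (starRingEnd ℂ) z ∈ K)
    (lam φ : ℝ) (hlam : 0 < lam) (hlam1 : lam ≠ 1)
    (hφ : φ ∈ Set.Ioc (-π) π)
    (hlamK : (lam : ℂ) ∈ K)
    (htrK : (lam : ℂ) * Complex.exp (Complex.I * φ) +
      (lam : ℂ)⁻¹ * Complex.exp (Complex.I * φ) + Complex.exp (-2 * Complex.I * φ) ∈ K) :
    (lam : ℂ) * Complex.exp (Complex.I * φ) ∈ K ∧
      Complex.exp (-2 * Complex.I * φ) ∈ K ∧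
      (lam : ℂ)⁻¹ * Complex.exp (Complex.I * φ) ∈ K := by
  have hlamne : (lam : ℂ) ≠ 0 := by
    exact_mod_cast ne_of_gt hlam
  set a : ℂ := Complex.exp (Complex.I * φ) with ha
  have ha0 : a ≠ 0 := Complex.exp_ne_zero _
  have habs : ‖a‖ = 1 := by
    rw [ha, Complex.norm_exp]; simp
  have hconj : (starRingEnd ℂ) a = a⁻¹ := by
    rw [ha, ← Complex.exp_conj, ← Complex.exp_neg]
    congr 1
    simp
  have hE : Complex.exp (-2 * Complex.I * ↑φ) = a⁻¹ ^ 2 := by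
    rw [ha, ← Complex.exp_neg, ← Complex.exp_nat_mul]
    congr 1
    push_cast
    ring
  -- μ
  set μr : ℝ := lam + lam⁻¹ with hμr
  have hμr2 : 2 < μr := by
    have h := sq_nonneg (lam - 1)
    have h2 : (lam - 1)^2 ≠ 0 := pow_ne_zero _ (sub_ne_zero.mpr hlam1)
    have h3 : 0 < (lam - 1)^2 := lt_of_le_of_ne h (Ne.symm h2)
    rw [hμr]
    have h4 : lam * lam⁻¹ = 1 := mul_inv_cancel₀ (ne_of_gt hlam)
    nlinarith [h3, h4, inv_pos.mpr hlam]
  set μ : ℂ := (μr : ℂ) with hμ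
  have hμK : μ ∈ K := by
    rw [hμ, hμr]
    push_cast
    exact K.add_mem hlamK (K.inv_mem hlamK)
  have hμne : μ ≠ 0 := by
    rw [hμ]
    exact_mod_cast ne_of_gt (lt_trans two_pos hμr2)
  -- T
  set T : ℂ := μ * a + a⁻¹ ^ 2 with hT
  have hTK : T ∈ K := by
    have : T = (lam : ℂ) * a + (lam : ℂ)⁻¹ * a + Complex.exp (-2 * Complex.I * φ) := by
      rw [hE, hT, hμ, hμr]
      push_cast
      ring
    rw [this]
    exact htrK
  set Tb : ℂ := μ * a⁻¹ + a ^ 2 with hTb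
  have hTbconj : (starRingEnd ℂ) T = Tb := by
    rw [hT, hTb, map_add, map_mul, map_pow, map_inv₀, hconj, hμ, Complex.conj_ofReal, inv_inv]
  have hTbK : Tb ∈ K := hTbconj ▸ hK T hTK
  have habsTb : ‖Tb‖ = ‖T‖ := by
    rw [← hTbconj, Complex.norm_conj]
  -- c2
  set c2 : ℂ := (T * Tb + μ ^ 2 - 1) * μ⁻¹ with hc2
  have hc2K : c2 ∈ K := K.mul_mem (by
      exact K.sub_mem (K.add_mem (K.mul_mem hTK hTbK) (K.pow_mem hμK 2)) K.one_mem)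
    (K.inv_mem hμK)
  -- D
  set D : ℂ := T ^ 2 - (μ ^ 2 - 1) * Tb with hD
  have hDK : D ∈ K := K.sub_mem (K.pow_mem hTK 2)
    (K.mul_mem (K.sub_mem (K.pow_mem hμK 2) K.one_mem) hTbK)
  -- key identity
  have hkey : D * a = μ * Tb * T - (μ ^ 2 - 1) * c2 := by
    have hab : a * a⁻¹ = 1 := mul_inv_cancel₀ ha0
    have hmn : μ * μ⁻¹ = 1 := mul_inv_cancel₀ hμne
    rw [hD, hc2, hT, hTb]
    linear_combination (-μ⁻¹ + 2*μ - 2*μ^3 + μ^4*μ⁻¹ + a⁻¹^3 - a*a⁻¹*μ⁻¹ + a*a⁻¹*μ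
        + a*a⁻¹*μ^2*μ⁻¹) * hab
      + (-2*μ + 2*μ^3 - a⁻¹^3 + a⁻¹^3*μ^2 - a^3 + a^3*μ^2) * hmn
  -- D ≠ 0
  have hDne : D ≠ 0 := by
    intro h0
    have hTne : T ≠ 0 := by
      intro hT0
      have : μ * a = -(a⁻¹ ^ 2) := by
        have := hT ▸ hT0
        linear_combination this
      have habs2 : ‖μ * a‖ = ‖-(a⁻¹ ^ 2)‖ := by rw [this]
      rw [norm_mul, norm_neg, norm_pow, norm_inv, habs] at habs2
      simp [hμ, Complex.norm_real, abs_of_pos (lt_trans two_pos hμr2)] at habs2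
      linarith
    have h1 : T ^ 2 = (μ ^ 2 - 1) * Tb := by linear_combination h0
    have h2 : ‖T‖ ^ 2 = (μr ^ 2 - 1) * ‖T‖ := by
      have := congrArg (‖·‖) h1
      rw [norm_pow, norm_mul, habsTb] at this
      rw [this]
      congr 1
      rw [hμ]
      have : ((μr : ℂ) ^ 2 - 1) = ((μr ^ 2 - 1 : ℝ) : ℂ) := by push_cast; ring
      rw [this, Complex.norm_real, Real.norm_eq_abs, abs_of_pos]
      nlinarith
    have hTle : ‖T‖ ≤ μr + 1 := by
      calc ‖T‖ ≤ ‖μ * a‖ + ‖a⁻¹ ^ 2‖ := by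
            rw [hT]; exact norm_add_le _ _
        _ = μr + 1 := by
            rw [norm_mul, norm_pow, norm_inv, habs, hμ, Complex.norm_real, Real.norm_eq_abs,
              abs_of_pos (lt_trans two_pos hμr2)]
            norm_num
    have hTpos : 0 < ‖T‖ := by
      simpa [norm_pos_iff] using hTne
    nlinarith [mul_le_mul_of_nonneg_left hTle hTpos.le,
      mul_pos (mul_pos (sub_pos.mpr hμr2) (by linarith : (0:ℝ) < μr + 1)) hTpos]
  have haK : a ∈ K := by
    have : a = D⁻¹ * (μ * Tb * T - (μ ^ 2 - 1) * c2) := by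
      rw [← hkey]
      field_simp
    rw [this]
    exact K.mul_mem (K.inv_mem hDK)
      (K.sub_mem (K.mul_mem (K.mul_mem hμK hTbK) hTK)
        (K.mul_mem (K.sub_mem (K.pow_mem hμK 2) K.one_mem) hc2K))
  refine ⟨K.mul_mem hlamK haK, ?_, K.mul_mem (K.inv_mem hlamK) haK⟩
  rw [hE]
  exact K.pow_mem (K.inv_mem haK) 2
end

section
/- Let λ > 0 with λ ≠ 1, φ real, and set λ₁ = λe^{iφ}, λ₂ = e^{-2iφ}, λ₃ = λ⁻¹e^{iφ}. Then the determinant of the 3×3 matrix with rows (1,1,1), (λ₁,λ₂,λ₃), (conj(λ₃),conj(λ₂),conj(λ₁)) equals (λ⁻² - λ²) + 2(λ - λ⁻¹)cos(3φ) and is nonzero. -/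
open Real Complex Matrix

theorem stmt_7 (lam φ : ℝ) (hlam : 0 < lam) (hlam1 : lam ≠ 1)
    (l1 l2 l3 : ℂ)
    (h1 : l1 = (lam : ℂ) * Complex.exp (Complex.I * φ))
    (h2 : l2 = Complex.exp (-2 * Complex.I * φ))
    (h3 : l3 = (lam : ℂ)⁻¹ * Complex.exp (Complex.I * φ)) :
    (!![1, 1, 1; l1, l2, l3;
        (starRingEnd ℂ) l3, (starRingEnd ℂ) l2, (starRingEnd ℂ) l1] : Matrix (Fin 3) (Fin 3) ℂ).det =
      ((lam⁻¹ ^ 2 - lam ^ 2 : ℝ) : ℂ) + 2 * ((lam - lam⁻¹ : ℝ) : ℂ) * (Real.cos (3 * φ) : ℂ) ∧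
    (!![1, 1, 1; l1, l2, l3;
        (starRingEnd ℂ) l3, (starRingEnd ℂ) l2, (starRingEnd ℂ) l1] : Matrix (Fin 3) (Fin 3) ℂ).det ≠ 0 := by
  have hlam0 : (lam : ℝ) ≠ 0 := ne_of_gt hlam
  set e : ℂ := Complex.exp (Complex.I * φ) with he_def
  have he : e ≠ 0 := Complex.exp_ne_zero _
  have hce : (starRingEnd ℂ) e = e⁻¹ := by
    rw [he_def, ← Complex.exp_conj, ← Complex.exp_neg]
    congr 1
    simp [Complex.conj_ofReal]
  have hl2 : l2 = (e ^ 2)⁻¹ := by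
    rw [h2, he_def, ← Complex.exp_nat_mul, ← Complex.exp_neg]
    congr 1
    push_cast
    ring
  have hcl1 : (starRingEnd ℂ) l1 = (lam : ℂ) * e⁻¹ := by
    rw [h1]
    simp [hce, Complex.conj_ofReal]
  have hcl3 : (starRingEnd ℂ) l3 = (lam : ℂ)⁻¹ * e⁻¹ := by
    rw [h3]
    simp [hce, Complex.conj_ofReal]
  have hcl2 : (starRingEnd ℂ) l2 = e ^ 2 := by
    rw [hl2]
    simp [hce, map_pow, inv_pow]
  have h3e : e ^ 3 = Complex.exp ((3 * φ : ℝ) * Complex.I) := by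
    rw [he_def, ← Complex.exp_nat_mul]
    congr 1
    push_cast
    ring
  have h3e' : (e ^ 3)⁻¹ = Complex.exp (-(3 * φ : ℝ) * Complex.I) := by
    rw [h3e, ← Complex.exp_neg]
    congr 1
    ring
  have hcos : (Real.cos (3 * φ) : ℂ) = (e ^ 3 + (e ^ 3)⁻¹) / 2 := by
    rw [Complex.ofReal_cos, h3e', h3e, ← Complex.two_cos]
    ring
  have hdet : (!![1, 1, 1; l1, l2, l3;
      (starRingEnd ℂ) l3, (starRingEnd ℂ) l2, (starRingEnd ℂ) l1] : Matrix (Fin 3) (Fin 3) ℂ).det =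
      ((lam⁻¹ ^ 2 - lam ^ 2 : ℝ) : ℂ) + 2 * ((lam - lam⁻¹ : ℝ) : ℂ) * (Real.cos (3 * φ) : ℂ) := by
    simp only [Matrix.det_fin_three, Matrix.cons_val', Matrix.cons_val_zero, Matrix.cons_val_one,
      Matrix.head_cons, Matrix.empty_val', Matrix.cons_val_fin_one, Matrix.head_fin_const,
      Matrix.cons_val_two, Matrix.tail_cons, Matrix.of_apply]
    rw [hcl1, hcl2, hcl3, h1, hl2, h3, hcos]
    have hlamC : (lam : ℂ) ≠ 0 := by exact_mod_cast hlam0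
    push_cast
    have hB := mul_inv_cancel₀ he
    linear_combination ((lam : ℂ)⁻¹ ^ 2 - (lam : ℂ) ^ 2) * hB
  refine ⟨hdet, ?_⟩
  rw [hdet]
  have key : (lam⁻¹ ^ 2 - lam ^ 2) + 2 * (lam - lam⁻¹) * Real.cos (3 * φ) ≠ 0 := by
    have hc1 : Real.cos (3 * φ) ≤ 1 := Real.cos_le_one _
    have hc2 : -1 ≤ Real.cos (3 * φ) := Real.neg_one_le_cos _
    have hgt : 2 < lam + lam⁻¹ := by
      have hinv : lam * lam⁻¹ = 1 := mul_inv_cancel₀ hlam0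
      have hd : lam - 1 ≠ 0 := sub_ne_zero.mpr hlam1
      have hsq : (lam - 1) ^ 2 > 0 := by positivity
      nlinarith [inv_pos.mpr hlam]
    intro h
    have hne : lam - lam⁻¹ ≠ 0 := by
      intro h0
      have : lam ^ 2 = 1 := by field_simp at h0; nlinarith
      have : lam = 1 := by nlinarith
      exact hlam1 this
    have hfac : (lam⁻¹ ^ 2 - lam ^ 2) + 2 * (lam - lam⁻¹) * Real.cos (3 * φ)
        = (lam - lam⁻¹) * (2 * Real.cos (3 * φ) - (lam + lam⁻¹)) := by
      field_simp
      ring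
    rw [hfac] at h
    rcases mul_eq_zero.mp h with h' | h'
    · exact hne h'
    · nlinarith
  intro h
  apply key
  exact_mod_cast h
end
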